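/- Let ν be a Lévy measure on ℝ that is absolutely continuous with respect to Lebesgue measure, with ν(ℝ) = ∞ and ∫_ℝ y² ν(dy) < ∞. For each Λ > 0 large enough let ε(Λ) > 0 be the solution of ∫_{{|y|>ε}} ν(dy) + (1/(4ε²)) ∫_{{|y|≤ε}} y² ν(dy) = Λ. Then lim_{Λ→∞} ε(Λ)² Λ = 0. -/

import Mathlib

open MeasureTheory Filter Set
open scoped ENNReal

lemma stmt_10_aux (ν : Measure ℝ) {s : Set ℝ} {c : ℝ} (hc : 0 ≤ c)
    (h : ∀ y ∈ s, c ≤ |y|) :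
    ENNReal.ofReal (c ^ 2) * ν s ≤ ∫⁻ y in s, ENNReal.ofReal (y ^ 2) ∂ν := by
  rw [← setLIntegral_const]
  refine setLIntegral_mono (by measurability) (fun y hy => ?_)
  refine ENNReal.ofReal_le_ofReal ?_
  have := h y hy
  nlinarith [abs_nonneg y, sq_abs y]

/-- If `ν` is an absolutely continuous Lévy measure with `ν(ℝ) = ∞` and `∫ y² ν(dy) < ∞`, and
for large `Λ`, `ε(Λ) > 0` solves
`ν({|y|>ε}) + (1/(4ε²)) ∫_{|y|≤ε} y² ν(dy) = Λ`, then `ε(Λ)² Λ → 0` as `Λ → ∞`. -/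
theorem stmt_10 (ν : Measure ℝ)
    (hν0 : ν {0} = 0) (hac : ν ≪ volume) (hνinf : ν Set.univ = ⊤)
    (hν2 : (∫⁻ y, ENNReal.ofReal (y ^ 2) ∂ν) < ⊤)
    (ε : ℝ → ℝ) (Λ₀ : ℝ)
    (hε : ∀ Λ, Λ₀ ≤ Λ → 0 < ε Λ)
    (hεdef : ∀ Λ, Λ₀ ≤ Λ →
      (ν {y : ℝ | ε Λ < |y|}).toReal
        + (1 / (4 * ε Λ ^ 2)) * (∫ y in {y : ℝ | |y| ≤ ε Λ}, y ^ 2 ∂ν) = Λ) :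
    Filter.Tendsto (fun Λ => ε Λ ^ 2 * Λ) Filter.atTop (nhds 0) := by
  obtain ⟨μ, hμdef⟩ : ∃ μ' : Measure ℝ, μ' = ν.withDensity (fun y => ENNReal.ofReal (y ^ 2)) :=
    ⟨_, rfl⟩
  have hmeas : Measurable fun y : ℝ => ENNReal.ofReal (y ^ 2) := by measurability
  have hsetle : ∀ c : ℝ, MeasurableSet {y : ℝ | |y| ≤ c} :=
    fun c => (isClosed_le continuous_abs continuous_const).measurableSet
  have hsetlt : ∀ c : ℝ, MeasurableSet {y : ℝ | c < |y|} :=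
    fun c => (isOpen_lt continuous_const continuous_abs).measurableSet
  have hμ_apply : ∀ s : Set ℝ, MeasurableSet s →
      μ s = ∫⁻ y in s, ENNReal.ofReal (y ^ 2) ∂ν :=
    fun s hs => by rw [hμdef]; exact withDensity_apply _ hs
  have hμuniv : μ Set.univ < ⊤ := by
    rw [hμ_apply _ MeasurableSet.univ, setLIntegral_univ]; exact hν2
  have hμfin : ∀ s : Set ℝ, μ s ≠ ⊤ := fun s =>
    ((measure_mono (subset_univ s)).trans_lt hμuniv).ne
  -- bound on ν of sets away from zero
  have hν_bd : ∀ (c : ℝ) (s : Set ℝ), 0 < c → MeasurableSet s → (∀ y ∈ s, c ≤ |y|) →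
      ENNReal.ofReal (c ^ 2) * ν s ≤ μ s := by
    intro c s hc hs h
    rw [hμ_apply _ hs]
    exact stmt_10_aux ν hc.le h
  have hν_fin : ∀ c : ℝ, 0 < c → ν {y : ℝ | c < |y|} < ⊤ := by
    intro c hc
    have h := hν_bd c _ hc (hsetlt c) (fun y hy => le_of_lt hy)
    have hc2 : ENNReal.ofReal (c ^ 2) ≠ 0 := by
      simp [ENNReal.ofReal_eq_zero, not_le]; positivity
    have : ν {y : ℝ | c < |y|} ≤ μ {y : ℝ | c < |y|} / ENNReal.ofReal (c ^ 2) :=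
      ENNReal.le_div_iff_mul_le (Or.inl hc2) (Or.inl ENNReal.ofReal_ne_top) |>.2
        (by rwa [mul_comm])
    exact this.trans_lt (ENNReal.div_lt_top (hμfin _) hc2)
  -- the Bochner integral in terms of μ
  have hI : ∀ c : ℝ, (∫ y in {y : ℝ | |y| ≤ c}, y ^ 2 ∂ν) = (μ {y : ℝ | |y| ≤ c}).toReal := by
    intro c
    rw [hμ_apply _ (hsetle c),
      integral_eq_lintegral_of_nonneg_ae (ae_of_all _ fun y => sq_nonneg y)
        ((measurable_id.pow_const 2).aestronglyMeasurable)]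
  -- ε Λ is eventually smaller than any positive c
  have hsmall : ∀ c : ℝ, 0 < c → ∀ᶠ Λ in atTop, ε Λ < c := by
    intro c hc
    obtain ⟨B, hB⟩ : ∃ B : ℝ, B = (ν {y : ℝ | c < |y|}).toReal
        + (1 / (4 * c ^ 2)) * (μ Set.univ).toReal := ⟨_, rfl⟩
    filter_upwards [eventually_ge_atTop Λ₀, eventually_gt_atTop B] with Λ h1 h2
    by_contra h
    push_neg at h
    have hεΛ := hε Λ h1
    have key := hεdef Λ h1
    rw [hI] at key
    have t1 : (ν {y : ℝ | ε Λ < |y|}).toReal ≤ (ν {y : ℝ | c < |y|}).toReal :=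
      ENNReal.toReal_mono (hν_fin c hc).ne
        (measure_mono (by
          intro y hy
          simp only [mem_setOf_eq] at hy ⊢
          exact lt_of_le_of_lt h hy))
    have t2 : (μ {y : ℝ | |y| ≤ ε Λ}).toReal ≤ (μ Set.univ).toReal :=
      ENNReal.toReal_mono hμuniv.ne (measure_mono (subset_univ _))
    have t3 : (1 : ℝ) / (4 * ε Λ ^ 2) ≤ 1 / (4 * c ^ 2) := by
      apply one_div_le_one_div_of_le (by positivity)
      nlinarith
    have t4 : (1 / (4 * ε Λ ^ 2)) * (μ {y : ℝ | |y| ≤ ε Λ}).toReal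
        ≤ (1 / (4 * c ^ 2)) * (μ Set.univ).toReal := by
      apply mul_le_mul t3 t2 ENNReal.toReal_nonneg (by positivity)
    linarith
  -- μ of small balls tends to 0
  have hμ0 : μ {(0 : ℝ)} = 0 := by
    rw [hμ_apply _ (measurableSet_singleton 0), lintegral_singleton]
    simp
  have hball : ∀ η : ℝ, 0 < η → ∃ δ : ℝ, 0 < δ ∧ (μ {y : ℝ | |y| ≤ δ}).toReal < η := by
    intro η hη
    have hanti : Antitone (fun n : ℕ => {y : ℝ | |y| ≤ 1 / (n + 1)}) := by
      intro m n hmn y hy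
      simp only [mem_setOf_eq] at hy ⊢
      refine le_trans hy ?_
      apply one_div_le_one_div_of_le (by positivity)
      exact_mod_cast by exact_mod_cast add_le_add_left (Nat.cast_le.2 hmn) 1
    have hinter : (⋂ n : ℕ, {y : ℝ | |y| ≤ 1 / (n + 1)}) = {(0 : ℝ)} := by
      ext y
      simp only [mem_iInter, mem_setOf_eq, mem_singleton_iff]
      constructor
      · intro h
        by_contra hy0
        obtain ⟨n, hn⟩ := exists_nat_gt (1 / |y|)
        have hy : 0 < |y| := abs_pos.2 hy0
        have h1 : 1 / |y| < n + 1 := hn.trans (by linarith)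
        have := h n
        have : (1 : ℝ) / (n + 1) < |y| := by
          rw [div_lt_iff₀ (by positivity)]
          rw [div_lt_iff₀ hy] at h1
          linarith
        linarith [h n]
      · intro h; subst h; intro n; simp; positivity
    have htend : Tendsto (fun n : ℕ => μ {y : ℝ | |y| ≤ 1 / (n + 1)}) atTop (nhds 0) := by
      have := tendsto_measure_iInter_atTop (μ := μ)
        (fun n : ℕ => ((hsetle (1 / (n + 1))).nullMeasurableSet)) hanti ⟨0, hμfin _⟩
      rwa [hinter, hμ0] at this
    have : ∀ᶠ n : ℕ in atTop, μ {y : ℝ | |y| ≤ 1 / (n + 1)} < ENNReal.ofReal η := by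
      refine htend (Iio_mem_nhds ?_)
      simpa using hη
    obtain ⟨n, hn⟩ := this.exists
    exact ⟨1 / (n + 1), by positivity, ENNReal.toReal_lt_of_lt_ofReal hn⟩
  -- main argument
  rw [show (0 : ℝ) = 0 from rfl]
  rw [Metric.tendsto_nhds]
  intro η hη
  obtain ⟨δ, hδ, hδη⟩ := hball (η / 8) (by positivity)
  obtain ⟨T, hT⟩ : ∃ T : ℝ, T = (ν {y : ℝ | δ < |y|}).toReal := ⟨_, rfl⟩
  have hT0 : 0 ≤ T := hT ▸ ENNReal.toReal_nonneg
  obtain ⟨c, hc0, hcδ, hcT⟩ : ∃ c : ℝ, 0 < c ∧ c ≤ δ ∧ c ^ 2 * T < η / 2 := by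
    set r : ℝ := Real.sqrt (η / (2 * (T + 1))) with hr
    have hrpos : 0 < r := Real.sqrt_pos.2 (by positivity)
    refine ⟨min δ r, lt_min hδ hrpos, min_le_left _ _, ?_⟩
    have h1 : min δ r ≤ r := min_le_right _ _
    have h0 : 0 < min δ r := lt_min hδ hrpos
    have h2 : (min δ r) ^ 2 ≤ η / (2 * (T + 1)) := by
      calc (min δ r) ^ 2 ≤ r ^ 2 := by nlinarith
        _ = η / (2 * (T + 1)) := Real.sq_sqrt (by positivity)
    calc (min δ r) ^ 2 * T ≤ (η / (2 * (T + 1))) * T := by nlinarith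
      _ < η / 2 := by
        rw [div_mul_eq_mul_div, div_lt_div_iff₀ (by positivity) (by norm_num)]
        nlinarith
  filter_upwards [eventually_ge_atTop Λ₀, hsmall c hc0] with Λ h1 h2
  have hεΛ : 0 < ε Λ := hε Λ h1
  have hεδ : ε Λ < δ := h2.trans_le hcδ
  have key := hεdef Λ h1
  rw [hI] at key
  -- compute ε² Λ
  have hne : ε Λ ≠ 0 := ne_of_gt hεΛ
  have hsplit : ε Λ ^ 2 * Λ = ε Λ ^ 2 * (ν {y : ℝ | ε Λ < |y|}).toReal
      + (1 / 4) * (μ {y : ℝ | |y| ≤ ε Λ}).toReal := by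
    nth_rewrite 2 [← key]
    field_simp
  -- bound the tail term
  have htail : ε Λ ^ 2 * (ν {y : ℝ | ε Λ < |y|}).toReal
      ≤ (μ {y : ℝ | |y| ≤ δ}).toReal + ε Λ ^ 2 * T := by
    have hsub : {y : ℝ | ε Λ < |y|} ⊆ ({y : ℝ | ε Λ < |y|} ∩ {y : ℝ | |y| ≤ δ}) ∪
        {y : ℝ | δ < |y|} := by
      intro y hy
      rcases le_or_gt (|y|) δ with h | h
      · exact Or.inl ⟨hy, h⟩
      · exact Or.inr h
    have hm1 : MeasurableSet ({y : ℝ | ε Λ < |y|} ∩ {y : ℝ | |y| ≤ δ}) :=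
      (hsetlt _).inter (hsetle _)
    have hfin1 : ν ({y : ℝ | ε Λ < |y|} ∩ {y : ℝ | |y| ≤ δ}) ≠ ⊤ :=
      ((measure_mono inter_subset_left).trans_lt (hν_fin _ hεΛ)).ne
    have hfin2 : ν {y : ℝ | δ < |y|} ≠ ⊤ := (hν_fin _ hδ).ne
    have hle : (ν {y : ℝ | ε Λ < |y|}).toReal
        ≤ (ν ({y : ℝ | ε Λ < |y|} ∩ {y : ℝ | |y| ≤ δ})).toReal + T := by
      rw [hT, ← ENNReal.toReal_add hfin1 hfin2]
      exact ENNReal.toReal_mono (by simp [ENNReal.add_ne_top, hfin1, hfin2])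
        ((measure_mono hsub).trans (measure_union_le _ _))
    have hmid : ε Λ ^ 2 * (ν ({y : ℝ | ε Λ < |y|} ∩ {y : ℝ | |y| ≤ δ})).toReal
        ≤ (μ {y : ℝ | |y| ≤ δ}).toReal := by
      have hb := hν_bd (ε Λ) _ hεΛ hm1 (fun y hy => le_of_lt hy.1)
      have : ENNReal.ofReal (ε Λ ^ 2) * ν ({y : ℝ | ε Λ < |y|} ∩ {y : ℝ | |y| ≤ δ})
          ≤ μ {y : ℝ | |y| ≤ δ} := hb.trans (measure_mono inter_subset_right)
      have := ENNReal.toReal_mono (hμfin _) this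
      rwa [ENNReal.toReal_mul, ENNReal.toReal_ofReal (by positivity)] at this
    have hfull := mul_le_mul_of_nonneg_left hle (sq_nonneg (ε Λ))
    rw [mul_add] at hfull
    linarith
  -- bound the small term
  have hsmall2 : (μ {y : ℝ | |y| ≤ ε Λ}).toReal ≤ (μ {y : ℝ | |y| ≤ δ}).toReal :=
    ENNReal.toReal_mono (hμfin _) (measure_mono (fun y hy => le_of_lt (lt_of_le_of_lt hy hεδ)))
  -- bound ε² T
  have hεT : ε Λ ^ 2 * T < η / 2 := by
    have hε2 : ε Λ ^ 2 ≤ c ^ 2 := pow_le_pow_left₀ hεΛ.le h2.le 2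
    exact (mul_le_mul_of_nonneg_right hε2 hT0).trans_lt hcT
  -- combine
  have hnn : 0 ≤ ε Λ ^ 2 * Λ := by
    rw [hsplit]
    positivity
  rw [Real.dist_eq, sub_zero, abs_of_nonneg hnn]
  calc ε Λ ^ 2 * Λ ≤ (μ {y : ℝ | |y| ≤ δ}).toReal + ε Λ ^ 2 * T
        + (1 / 4) * (μ {y : ℝ | |y| ≤ δ}).toReal := by
        rw [hsplit]; linarith
    _ < η := by linarith
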